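/- Let M be a d-dimensional subspace of the space of m×n real matrices and let X₁*,…,X_d* ∈ M be produced by the greedy algorithm. Let B_ℓ = {X₁,…,X_ℓ} ⊆ M be a linearly independent set with rank(X₁) ≤ ⋯ ≤ rank(X_ℓ). Then B_ℓ is of minimal rank if and only if rank(X_i) = rank(X_i*) for every i = 1,…,ℓ. In particular, {X₁*,…,X_ℓ*} is of minimal rank. -/

import Mathlib

/-- `Xs : Fin d → ℝ^{m×n}` is produced by the greedy algorithm for the subspace `M`:
each `Xs ℓ` lies in `M`, the first `ℓ+1` matrices are linearly independent, and `Xs ℓ`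
has minimal rank among all `X ∈ M` keeping the first `ℓ` matrices together with `X`
linearly independent. -/
def GreedyProduced {m n d : ℕ} (M : Submodule ℝ (Matrix (Fin m) (Fin n) ℝ))
    (Xs : Fin d → Matrix (Fin m) (Fin n) ℝ) : Prop :=
  (∀ i, Xs i ∈ M) ∧
  ∀ ℓ : Fin d,
    LinearIndependent ℝ (fun i : Fin (ℓ.1 + 1) => Xs (Fin.castLE ℓ.isLt i)) ∧
    ∀ X ∈ M,
      LinearIndependent ℝ
        (Fin.snoc (fun i : Fin ℓ.1 => Xs (Fin.castLE ℓ.isLt.le i)) X) →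
      (Xs ℓ).rank ≤ X.rank

/-- A linearly independent family `X₁,…,X_ℓ ⊆ M` is of minimal rank if the sum of
the ranks of its members is minimal among all linearly independent families of
`ℓ` elements of `M`. -/
def IsMinimalRank {m n ℓ : ℕ} (M : Submodule ℝ (Matrix (Fin m) (Fin n) ℝ))
    (X : Fin ℓ → Matrix (Fin m) (Fin n) ℝ) : Prop :=
  (∀ i, X i ∈ M) ∧ LinearIndependent ℝ X ∧
  ∀ Y : Fin ℓ → Matrix (Fin m) (Fin n) ℝ,
    (∀ i, Y i ∈ M) → LinearIndependent ℝ Y →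
    ∑ i, (X i).rank ≤ ∑ i, (Y i).rank

open Module Submodule Set

lemma greedy_key {m n d : ℕ} {M : Submodule ℝ (Matrix (Fin m) (Fin n) ℝ)}
    {Xstar : Fin d → Matrix (Fin m) (Fin n) ℝ}
    (hgreedy : GreedyProduced M Xstar)
    {ℓ : ℕ} (hℓ : ℓ ≤ d) (Y : Fin ℓ → Matrix (Fin m) (Fin n) ℝ)
    (hYM : ∀ i, Y i ∈ M) (hli : LinearIndependent ℝ Y)
    (hmono : Monotone fun i => (Y i).rank) :
    ∀ i : Fin ℓ, (Xstar (Fin.castLE hℓ i)).rank ≤ (Y i).rank := by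
  intro i
  have hk : i.1 < d := lt_of_lt_of_le i.isLt hℓ
  set k := i.1 with hkdef
  have hex : ∃ j : Fin ℓ, j ≤ i ∧
      Y j ∉ span ℝ (range fun t : Fin k => Xstar (Fin.castLE hk.le t)) := by
    by_contra h
    push_neg at h
    have hsub : LinearIndependent ℝ (fun t : Fin (k + 1) => Y (Fin.castLE i.isLt t)) :=
      hli.comp _ (Fin.castLE_injective _)
    have hle : span ℝ (range fun t : Fin (k + 1) => Y (Fin.castLE i.isLt t)) ≤
        span ℝ (range fun t : Fin k => Xstar (Fin.castLE hk.le t)) := by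
      rw [span_le]
      rintro _ ⟨t, rfl⟩
      exact h _ (by simpa [Fin.le_def] using Nat.lt_succ_iff.mp t.isLt)
    have h1 : finrank ℝ (span ℝ (range fun t : Fin (k + 1) => Y (Fin.castLE i.isLt t)))
        = k + 1 := by
      simpa using finrank_span_eq_card hsub
    have h2 : finrank ℝ (span ℝ (range fun t : Fin k => Xstar (Fin.castLE hk.le t))) ≤ k := by
      simpa [Set.finrank] using finrank_range_le_card (R := ℝ) (fun t : Fin k => Xstar (Fin.castLE hk.le t))
    have := (Submodule.finrank_mono hle).trans h2
    omega
  obtain ⟨j, hji, hjs⟩ := hex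
  have hXli : LinearIndependent ℝ (fun t : Fin k => Xstar (Fin.castLE hk.le t)) := by
    have := (hgreedy.2 ⟨k, hk⟩).1.comp (Fin.castSucc) (Fin.castSucc_injective k)
    exact this
  have hsnoc : LinearIndependent ℝ
      (Fin.snoc (fun t : Fin k => Xstar (Fin.castLE hk.le t)) (Y j)) :=
    linearIndependent_fin_snoc.mpr ⟨hXli, hjs⟩
  have hrk : (Xstar ⟨k, hk⟩).rank ≤ (Y j).rank :=
    (hgreedy.2 ⟨k, hk⟩).2 (Y j) (hYM j) hsnoc
  exact hrk.trans (hmono hji)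

/-- Lower bound: greedy rank sum is ≤ rank sum of any linearly independent family. -/
lemma greedy_lower {m n d : ℕ} {M : Submodule ℝ (Matrix (Fin m) (Fin n) ℝ)}
    {Xstar : Fin d → Matrix (Fin m) (Fin n) ℝ}
    (hgreedy : GreedyProduced M Xstar)
    {ℓ : ℕ} (hℓ : ℓ ≤ d) (Y : Fin ℓ → Matrix (Fin m) (Fin n) ℝ)
    (hYM : ∀ i, Y i ∈ M) (hli : LinearIndependent ℝ Y) :
    ∑ i, (Xstar (Fin.castLE hℓ i)).rank ≤ ∑ i, (Y i).rank := by
  set σ := Tuple.sort (fun i => (Y i).rank) with hσ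
  have hmono : Monotone fun i => (Y (σ i)).rank := Tuple.monotone_sort (fun i => (Y i).rank)
  have hkey := greedy_key hgreedy hℓ (fun i => Y (σ i)) (fun i => hYM _)
    (hli.comp σ σ.injective) hmono
  calc ∑ i, (Xstar (Fin.castLE hℓ i)).rank ≤ ∑ i, (Y (σ i)).rank :=
        Finset.sum_le_sum fun i _ => hkey i
    _ = ∑ i, (Y i).rank := Equiv.sum_comp σ (fun i => (Y i).rank)


/-- Theorem: a linearly independent family with nondecreasing ranks is of minimal
rank if and only if its ranks agree with those produced by the greedy algorithm;
in particular the first `ℓ` greedy matrices are of minimal rank. -/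
theorem isMinimalRank_iff_rank_eq_greedy {m n d : ℕ}
    (M : Submodule ℝ (Matrix (Fin m) (Fin n) ℝ))
    (hM : Module.finrank ℝ M = d)
    (Xstar : Fin d → Matrix (Fin m) (Fin n) ℝ)
    (hgreedy : GreedyProduced M Xstar)
    (ℓ : ℕ) (hℓ1 : 1 ≤ ℓ) (hℓ : ℓ ≤ d)
    (X : Fin ℓ → Matrix (Fin m) (Fin n) ℝ)
    (hXM : ∀ i, X i ∈ M)
    (hli : LinearIndependent ℝ X)
    (hmono : Monotone fun i => (X i).rank) :
    (IsMinimalRank M X ↔ ∀ i : Fin ℓ, (X i).rank = (Xstar (Fin.castLE hℓ i)).rank) ∧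
    IsMinimalRank M (fun i : Fin ℓ => Xstar (Fin.castLE hℓ i)) := by
  -- the greedy family is linearly independent
  have hgli : LinearIndependent ℝ (fun i : Fin ℓ => Xstar (Fin.castLE hℓ i)) := by
    obtain ⟨k, rfl⟩ : ∃ k, ℓ = k + 1 := ⟨ℓ - 1, (Nat.succ_pred_eq_of_pos hℓ1).symm⟩
    have hk : k < d := hℓ
    exact (hgreedy.2 ⟨k, hk⟩).1
  have hgmin : IsMinimalRank M (fun i : Fin ℓ => Xstar (Fin.castLE hℓ i)) :=
    ⟨fun i => hgreedy.1 _, hgli, fun Y hYM hYli => greedy_lower hgreedy hℓ Y hYM hYli⟩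
  have hkey := greedy_key hgreedy hℓ X hXM hli hmono
  refine ⟨⟨fun hmin => ?_, fun heq => ?_⟩, hgmin⟩
  · -- minimal rank → ranks agree
    have hle : ∑ i, (X i).rank ≤ ∑ i, (Xstar (Fin.castLE hℓ i)).rank :=
      hmin.2.2 _ (fun i => hgreedy.1 _) hgli
    have heqsum : ∑ i, (Xstar (Fin.castLE hℓ i)).rank = ∑ i, (X i).rank :=
      le_antisymm (Finset.sum_le_sum fun i _ => hkey i) hle
    have := (Finset.sum_eq_sum_iff_of_le (fun i _ => hkey i)).mp heqsum
    exact fun i => (this i (Finset.mem_univ i)).symm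
  · -- ranks agree → minimal rank
    refine ⟨hXM, hli, fun Y hYM hYli => ?_⟩
    have : ∑ i, (X i).rank = ∑ i, (Xstar (Fin.castLE hℓ i)).rank :=
      Finset.sum_congr rfl fun i _ => heq i
    rw [this]
    exact greedy_lower hgreedy hℓ Y hYM hYli
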